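/- Maximum principle two-sided bound: Under the same assumptions as the Hamilton–Jacobi system above (coefficients γ± ≥ 0 with boundary conventions, h nondecreasing in p, M = max_{i,θ}|h(0,θ,i)|), any solution u of -du_n/dt = γ⁺_n(u_{n+1}-u_n) + γ⁻_n(u_{n-1}-u_n) + h(ū_n - u_n, n/N, i) on [0,T] satisfies ‖u(t)‖_∞ ≤ ‖u(T)‖_∞ + 2M(T-t) for all 0 ≤ t ≤ T, where ‖u(t)‖_∞ = max_{n,i}|u_n(i,t)|. -/

import Mathlib

open Set

/-- Core one-sided estimate with a positive margin `ε`. -/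
lemma upper_eps_bound (N : ℕ) (hN : 1 ≤ N) (T : ℝ) (hT : 0 < T)
    (u : Fin 2 → ℕ → ℝ → ℝ) (γp γm : Fin 2 → ℕ → ℝ → ℝ)
    (h : ℝ → ℝ → Fin 2 → ℝ) (M UT : ℝ)
    (hγp : ∀ i n t, 0 ≤ γp i n t) (hγm : ∀ i n t, 0 ≤ γm i n t)
    (hb0 : ∀ i t, γm i 0 t = 0) (hbN : ∀ i t, γp i N t = 0)
    (hmono : ∀ θ i, Monotone fun p => h p θ i)
    (hM : ∀ θ ∈ Icc (0:ℝ) 1, ∀ i, |h 0 θ i| ≤ M)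
    (hUT : ∀ j m, m ≤ N → |u j m T| ≤ UT)
    (hode : ∀ i n, n ≤ N → ∀ t ∈ Icc 0 T,
      HasDerivAt (u i n)
        (-(γp i n t * (u i (n+1) t - u i n t) + γm i n t * (u i (n-1) t - u i n t)
          + h (u (1-i) n t - u i n t) ((n : ℝ) / N) i)) t)
    (ε : ℝ) (hε : 0 < ε) :
    ∀ i n, n ≤ N → ∀ t ∈ Icc 0 T, u i n t ≤ UT + ε + (M + ε) * (T - t) := by
  by_contra hcon
  push_neg at hcon
  obtain ⟨i₀, n₀, hn₀, t₀, ht₀, hgt⟩ := hcon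
  have hNpos : (0:ℝ) < (N:ℝ) := by positivity
  set B : ℝ → ℝ := fun t => UT + ε + (M + ε) * (T - t) with hB
  haveI : Nonempty (Fin 2 × Fin (N+1)) := ⟨(0, 0)⟩
  have hun : (Finset.univ : Finset (Fin 2 × Fin (N+1))).Nonempty := Finset.univ_nonempty
  set φ : ℝ → ℝ := fun t =>
    Finset.univ.sup' hun (fun s : Fin 2 × Fin (N+1) => u s.1 s.2 t) with hφ
  -- continuity of each component on [t₀, T]
  have hcontu : ∀ s : Fin 2 × Fin (N+1), ContinuousOn (fun t => u s.1 (s.2 : ℕ) t) (Icc t₀ T) := by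
    intro s t ht
    have hts : t ∈ Icc 0 T := ⟨le_trans ht₀.1 ht.1, ht.2⟩
    exact ((hode s.1 s.2 (Fin.is_le s.2) t hts).continuousAt).continuousWithinAt
  set A : Set ℝ := {t | t ∈ Icc t₀ T ∧ B t ≤ φ t} with hA
  have hAeq : A = ⋃ s : Fin 2 × Fin (N+1), {t ∈ Icc t₀ T | B t ≤ u s.1 (s.2 : ℕ) t} := by
    ext t
    simp only [hA, mem_setOf_eq, mem_iUnion, hφ, Finset.le_sup'_iff, Finset.mem_univ, true_and]
    constructor
    · rintro ⟨ht, s, hs⟩; exact ⟨s, ht, hs⟩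
    · rintro ⟨s, ht, hs⟩; exact ⟨ht, s, hs⟩
  have hAclosed : IsClosed A := by
    rw [hAeq]
    refine isClosed_iUnion_of_finite (fun s => ?_)
    exact isClosed_Icc.isClosed_le (Continuous.continuousOn (by fun_prop)) (hcontu s)
  have ht₀A : t₀ ∈ A := by
    refine ⟨⟨le_refl _, ht₀.2⟩, ?_⟩
    have : u i₀ n₀ t₀ ≤ φ t₀ := by
      exact Finset.le_sup' (f := fun s : Fin 2 × Fin (N+1) => u s.1 s.2 t₀)
        (Finset.mem_univ (i₀, (⟨n₀, by omega⟩ : Fin (N+1))))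
    exact le_trans hgt.le this
  have hbdd : BddAbove A := ⟨T, fun t ht => ht.1.2⟩
  set ts : ℝ := sSup A with hts
  have htsA : ts ∈ A := hAclosed.csSup_mem ⟨t₀, ht₀A⟩ hbdd
  have hφT : φ T ≤ UT := by
    refine Finset.sup'_le _ _ (fun s _ => ?_)
    exact le_trans (le_abs_self _) (hUT s.1 s.2 (Fin.is_le s.2))
  have htsT : ts < T := by
    rcases lt_or_eq_of_le htsA.1.2 with hlt | heq
    · exact hlt
    · exfalso
      have h1 : B T ≤ φ T := heq ▸ htsA.2
      have : B T = UT + ε := by simp [hB]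
      linarith [hφT, this ▸ h1]
  -- the maximizing component at time ts
  obtain ⟨s, -, hsmax⟩ := Finset.exists_mem_eq_sup' hun
    (fun s : Fin 2 × Fin (N+1) => u s.1 s.2 ts)
  set i : Fin 2 := s.1
  set n : ℕ := (s.2 : ℕ) with hn
  have hnN : n ≤ N := Fin.is_le s.2
  have hmax : ∀ s' : Fin 2 × Fin (N+1), u s'.1 s'.2 ts ≤ u i n ts := by
    intro s'
    have := Finset.le_sup' (f := fun s : Fin 2 × Fin (N+1) => u s.1 s.2 ts)
      (Finset.mem_univ s')
    calc u s'.1 s'.2 ts ≤ φ ts := this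
    _ = u i n ts := hsmax
  have hBts : B ts ≤ u i n ts := le_trans htsA.2 (le_of_eq hsmax)
  have htsIcc : ts ∈ Icc (0:ℝ) T := ⟨le_trans ht₀.1 htsA.1.1, htsA.1.2⟩
  have hd := hode i n hnN ts htsIcc
  -- the derivative is ≥ -M
  have hterm1 : γp i n ts * (u i (n+1) ts - u i n ts) ≤ 0 := by
    rcases eq_or_lt_of_le hnN with hEq | hlt
    · rw [hEq, hbN]; simp
    · have : u i (n+1) ts ≤ u i n ts := by
        have := hmax (i, (⟨n+1, by omega⟩ : Fin (N+1)))
        simpa using this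
      exact mul_nonpos_of_nonneg_of_nonpos (hγp i n ts) (by linarith)
  have hterm2 : γm i n ts * (u i (n-1) ts - u i n ts) ≤ 0 := by
    rcases Nat.eq_zero_or_pos n with hEq | hpos
    · rw [hEq, hb0]; simp
    · have : u i (n-1) ts ≤ u i n ts := by
        have := hmax (i, (⟨n-1, by omega⟩ : Fin (N+1)))
        simpa using this
      exact mul_nonpos_of_nonneg_of_nonpos (hγm i n ts) (by linarith)
  have hterm3 : h (u (1-i) n ts - u i n ts) ((n : ℝ) / N) i ≤ M := by
    have harg : u (1-i) n ts - u i n ts ≤ 0 := by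
      have := hmax (1-i, s.2)
      simp only [hn] at this ⊢
      linarith
    have hθ : (n : ℝ) / N ∈ Icc (0:ℝ) 1 := by
      constructor
      · positivity
      · rw [div_le_one hNpos]; exact_mod_cast hnN
    calc h (u (1-i) n ts - u i n ts) ((n : ℝ) / N) i ≤ h 0 ((n : ℝ) / N) i :=
          hmono _ _ harg
    _ ≤ |h 0 ((n : ℝ) / N) i| := le_abs_self _
    _ ≤ M := hM _ hθ i
  have hDge : -M ≤ -(γp i n ts * (u i (n+1) ts - u i n ts)
      + γm i n ts * (u i (n-1) ts - u i n ts)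
      + h (u (1-i) n ts - u i n ts) ((n : ℝ) / N) i) := by linarith
  -- slope estimate from the right
  have hslope : ∀ t ∈ Ioc ts T, slope (u i n) ts t ≤ -(M + ε) := by
    intro t ht
    have htpos : 0 < t - ts := sub_pos.mpr ht.1
    have htA : t ∉ A := fun hmem => absurd (le_csSup hbdd hmem) (not_le.mpr ht.1)
    have htIcc : t ∈ Icc t₀ T := ⟨le_trans htsA.1.1 ht.1.le, ht.2⟩
    have hφt : φ t < B t := by
      by_contra hc
      exact htA ⟨htIcc, not_lt.mp hc⟩
    have hut : u i n t ≤ φ t := by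
      exact Finset.le_sup' (f := fun s : Fin 2 × Fin (N+1) => u s.1 s.2 t)
        (Finset.mem_univ s)
    have hkey : u i n t - u i n ts < -(M + ε) * (t - ts) := by
      have h1 : u i n t < B t := lt_of_le_of_lt hut hφt
      have h2 : B t - B ts = -(M + ε) * (t - ts) := by simp [hB]; ring
      linarith [hBts]
    rw [slope_def_field, div_le_iff₀ htpos]
    linarith
  have htend : Filter.Tendsto (slope (u i n) ts) (nhdsWithin ts (Ioi ts))
      (nhds (-(γp i n ts * (u i (n+1) ts - u i n ts)
      + γm i n ts * (u i (n-1) ts - u i n ts)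
      + h (u (1-i) n ts - u i n ts) ((n : ℝ) / N) i))) := by
    have := hasDerivAt_iff_tendsto_slope.mp hd
    exact this.mono_left (nhdsWithin_mono _ (fun x hx => ne_of_gt hx))
  have hle : -(γp i n ts * (u i (n+1) ts - u i n ts)
      + γm i n ts * (u i (n-1) ts - u i n ts)
      + h (u (1-i) n ts - u i n ts) ((n : ℝ) / N) i) ≤ -(M + ε) := by
    refine le_of_tendsto htend ?_
    filter_upwards [Ioc_mem_nhdsGT htsT] with t ht
    exact hslope t ht
  linarith

/-- One-sided upper bound obtained by letting `ε → 0`. -/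
lemma upper_bound (N : ℕ) (hN : 1 ≤ N) (T : ℝ) (hT : 0 < T)
    (u : Fin 2 → ℕ → ℝ → ℝ) (γp γm : Fin 2 → ℕ → ℝ → ℝ)
    (h : ℝ → ℝ → Fin 2 → ℝ) (M UT : ℝ)
    (hγp : ∀ i n t, 0 ≤ γp i n t) (hγm : ∀ i n t, 0 ≤ γm i n t)
    (hb0 : ∀ i t, γm i 0 t = 0) (hbN : ∀ i t, γp i N t = 0)
    (hmono : ∀ θ i, Monotone fun p => h p θ i)
    (hM : ∀ θ ∈ Icc (0:ℝ) 1, ∀ i, |h 0 θ i| ≤ M)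
    (hUT : ∀ j m, m ≤ N → |u j m T| ≤ UT)
    (hode : ∀ i n, n ≤ N → ∀ t ∈ Icc 0 T,
      HasDerivAt (u i n)
        (-(γp i n t * (u i (n+1) t - u i n t) + γm i n t * (u i (n-1) t - u i n t)
          + h (u (1-i) n t - u i n t) ((n : ℝ) / N) i)) t) :
    ∀ i n, n ≤ N → ∀ t ∈ Icc 0 T, u i n t ≤ UT + M * (T - t) := by
  intro i n hn t ht
  by_contra hc
  push_neg at hc
  set δ : ℝ := u i n t - (UT + M * (T - t)) with hδ
  have hδpos : 0 < δ := by simp [hδ]; linarith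
  have hTt : 0 ≤ T - t := by linarith [ht.2]
  set ε : ℝ := δ / (2 * (1 + (T - t))) with hε
  have hεpos : 0 < ε := by positivity
  have := upper_eps_bound N hN T hT u γp γm h M UT hγp hγm hb0 hbN hmono hM hUT hode
    ε hεpos i n hn t ht
  have hkey : ε * (1 + (T - t)) = δ / 2 := by
    rw [hε]
    field_simp
  nlinarith [this, hkey]

theorem maximum_principle_two_sided (N : ℕ) (hN : 1 ≤ N) (T : ℝ) (hT : 0 < T)
    (u : Fin 2 → ℕ → ℝ → ℝ) (γp γm : Fin 2 → ℕ → ℝ → ℝ)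
    (h : ℝ → ℝ → Fin 2 → ℝ) (M UT : ℝ)
    (hγp : ∀ i n t, 0 ≤ γp i n t) (hγm : ∀ i n t, 0 ≤ γm i n t)
    (hb0 : ∀ i t, γm i 0 t = 0) (hbN : ∀ i t, γp i N t = 0)
    (hmono : ∀ θ i, Monotone fun p => h p θ i)
    (hM : ∀ θ ∈ Icc (0:ℝ) 1, ∀ i, |h 0 θ i| ≤ M)
    (hUT : ∀ j m, m ≤ N → |u j m T| ≤ UT)
    (hode : ∀ i n, n ≤ N → ∀ t ∈ Icc 0 T,
      HasDerivAt (u i n)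
        (-(γp i n t * (u i (n+1) t - u i n t) + γm i n t * (u i (n-1) t - u i n t)
          + h (u (1-i) n t - u i n t) ((n : ℝ) / N) i)) t) :
    ∀ i n, n ≤ N → ∀ t ∈ Icc 0 T, |u i n t| ≤ UT + 2 * M * (T - t) := by
  intro i n hn t ht
  have hM0 : 0 ≤ M := le_trans (abs_nonneg _) (hM 0 ⟨le_refl _, zero_le_one⟩ 0)
  have hTt : 0 ≤ T - t := by linarith [ht.2]
  -- upper bound
  have hup := upper_bound N hN T hT u γp γm h M UT hγp hγm hb0 hbN hmono hM hUT hode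
    i n hn t ht
  -- lower bound via the flipped system
  set v : Fin 2 → ℕ → ℝ → ℝ := fun j m s => -(u j m s) with hv
  set h' : ℝ → ℝ → Fin 2 → ℝ := fun p θ j => -(h (-p) θ j) with hh'
  have hmono' : ∀ θ j, Monotone fun p => h' p θ j := by
    intro θ j p q hpq
    simp only [hh']
    exact neg_le_neg (hmono θ j (neg_le_neg hpq))
  have hM' : ∀ θ ∈ Icc (0:ℝ) 1, ∀ j, |h' 0 θ j| ≤ M := by
    intro θ hθ j
    simp only [hh', neg_zero, abs_neg]
    exact hM θ hθ j
  have hUT' : ∀ j m, m ≤ N → |v j m T| ≤ UT := by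
    intro j m hm
    simp only [hv, abs_neg]
    exact hUT j m hm
  have hode' : ∀ j m, m ≤ N → ∀ s ∈ Icc 0 T,
      HasDerivAt (v j m)
        (-(γp j m s * (v j (m+1) s - v j m s) + γm j m s * (v j (m-1) s - v j m s)
          + h' (v (1-j) m s - v j m s) ((m : ℝ) / N) j)) s := by
    intro j m hm s hs
    have hd := (hode j m hm s hs).neg
    refine hd.congr_deriv ?_
    have harg : v (1-j) m s - v j m s = -(u (1-j) m s - u j m s) := by
      simp [hv]; ring
    simp only [hh', harg, neg_neg]
    ring
  have hlow := upper_bound N hN T hT v γp γm h' M UT hγp hγm hb0 hbN hmono' hM' hUT' hode'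
    i n hn t ht
  simp only [hv] at hlow
  rw [abs_le]
  constructor <;> nlinarith
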